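/- Let C2⊥, C4⊥ ⊆ F_2^n be linear codes and A, B be k×n binary matrices of rank k (coset representatives for CSS codes in stations A and B). Suppose (ψ^A A)·z + y·(ψ^B B + z) = 0 in F_2 for all ψ^A, ψ^B ∈ F_2^k, y ∈ C2⊥, z ∈ C4⊥, and A Bᵀ = I_k. Then for all ψ^A, ψ^B, y, z: (−1)^{(ψ^A A + y)·(ψ^B B + z)} = (−1)^{ψ^A · ψ^B}, i.e., the physical transversal CZ phase equals the logical CZ phase. -/
import Mathlib

open Matrix

/-- sufficiency direction of the CZ-transversality theorem: if the bilinear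
condition (14) holds and `A * Bᵀ = I`, then the physical CZ phase equals the logical CZ phase. -/
theorem cz_phase_of_conditions {n k : ℕ}
    (C2perp C4perp : Submodule (ZMod 2) (Fin n → ZMod 2))
    (A B : Matrix (Fin k) (Fin n) (ZMod 2))
    (hA : LinearIndependent (ZMod 2) (fun i => A i))
    (hB : LinearIndependent (ZMod 2) (fun i => B i))
    (hcond : ∀ (ψA ψB : Fin k → ZMod 2), ∀ y ∈ C2perp, ∀ z ∈ C4perp,
      (ψA ᵥ* A) ⬝ᵥ z + y ⬝ᵥ (ψB ᵥ* B + z) = 0)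
    (hAB : A * B.transpose = 1) :
    ∀ (ψA ψB : Fin k → ZMod 2), ∀ y ∈ C2perp, ∀ z ∈ C4perp,
      ((-1 : ℚ) ^ (((ψA ᵥ* A + y) ⬝ᵥ (ψB ᵥ* B + z)).val)) =
      ((-1 : ℚ) ^ ((ψA ⬝ᵥ ψB).val)) := by
  intro ψA ψB y hy z hz
  congr 1
  have key : (ψA ᵥ* A + y) ⬝ᵥ (ψB ᵥ* B + z) = ψA ⬝ᵥ ψB := by
    have h1 : (ψA ᵥ* A) ⬝ᵥ (ψB ᵥ* B) = ψA ⬝ᵥ ψB := by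
      rw [show ψB ᵥ* B = Bᵀ *ᵥ ψB from (mulVec_transpose B ψB).symm, dotProduct_mulVec, vecMul_vecMul, hAB, vecMul_one]
    have h2 := hcond ψA ψB y hy z hz
    calc (ψA ᵥ* A + y) ⬝ᵥ (ψB ᵥ* B + z)
        = (ψA ᵥ* A) ⬝ᵥ (ψB ᵥ* B) + ((ψA ᵥ* A) ⬝ᵥ z + y ⬝ᵥ (ψB ᵥ* B + z)) := by
          simp [add_dotProduct, dotProduct_add]; ring
      _ = ψA ⬝ᵥ ψB := by rw [h1, h2, add_zero]
  rw [key]
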